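/- Let n ≥ 1 and let A be the n×n real matrix with diagonal entries a_1, …, a_n, with entries A[i, i+1] = 1 for i = 1, …, n−1, with last-row entries A[n, j] = b_{n+1−j} for j = 1, …, n−1, and all other entries zero. Then the characteristic polynomial of A equals ∏_{i=1}^{n}(x − a_i) − ∑_{j=2}^{n} b_j · ∏_{i=1}^{n−j}(x − a_i). -/

import Mathlib

open Polynomial

/-- The `n × n` matrix (indices `0, …, n-1` corresponding to `1, …, n`) with diagonal
`a 0, …, a (n-1)`, superdiagonal entries `1`, last row below the diagonal
`b n, b (n-1), …, b 2`, and zeros elsewhere. -/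
def companionPlusDiag (n : ℕ) (a b : ℕ → ℝ) : Matrix (Fin n) (Fin n) ℝ :=
  fun i j =>
    if (i : ℕ) = (j : ℕ) then a (i : ℕ)
    else if (i : ℕ) + 1 = (j : ℕ) then 1
    else if (i : ℕ) = n - 1 then b (n - (j : ℕ))
    else 0

lemma companionPlusDiag_aux (b : ℕ → ℝ) : ∀ (n : ℕ) (a : ℕ → ℝ),
    (companionPlusDiag (n+1) a b).charpoly =
      ∏ i ∈ Finset.range (n+1), (X - C (a i)) -
        ∑ j ∈ Finset.Icc 2 (n+1), C (b j) * ∏ i ∈ Finset.range (n+1 - j), (X - C (a i)) := by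
  intro n
  induction n with
  | zero =>
    intro a
    rw [Matrix.charpoly, Matrix.det_fin_one]
    rw [show Finset.Icc 2 1 = (∅ : Finset ℕ) from Finset.Icc_eq_empty (by omega)]
    simp [companionPlusDiag, Matrix.charmatrix_apply_eq]
  | succ n ih =>
    intro a
    set M := companionPlusDiag (n+1+1) a b with hM
    -- the (0,0) minor
    have h0 : (Matrix.charmatrix M).submatrix Fin.succ Fin.succ
        = Matrix.charmatrix (companionPlusDiag (n+1) (fun k => a (k+1)) b) := by
      funext i j
      rw [Matrix.submatrix_apply, Matrix.charmatrix_apply, Matrix.charmatrix_apply]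
      have hd : (Matrix.diagonal fun _ : Fin (n+1+1) => (X : ℝ[X])) i.succ j.succ
          = (Matrix.diagonal fun _ : Fin (n+1) => (X : ℝ[X])) i j := by
        by_cases h : i = j
        · subst h; simp
        · rw [Matrix.diagonal_apply_ne _ (fun hh => h (Fin.succ_inj.mp hh)),
            Matrix.diagonal_apply_ne _ h]
      rw [hd]
      have key : companionPlusDiag (n+1+1) a b i.succ j.succ
          = companionPlusDiag (n+1) (fun k => a (k+1)) b i j := by
        simp only [companionPlusDiag, Fin.val_succ, Nat.add_sub_cancel]
        split_ifs <;> first | rfl | omega | (exact congrArg b (by omega)) | (exact congrArg a (by omega))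
      show _ - C (companionPlusDiag (n+1+1) a b i.succ j.succ) = _
      rw [key]
    -- the last-row minor is lower triangular
    have hNtri : (((Matrix.charmatrix M).submatrix (Fin.last (n+1)).succAbove Fin.succ)).BlockTriangular
        OrderDual.toDual := by
      intro i j hij
      have hij' : (i : ℕ) < (j : ℕ) := hij
      rw [Matrix.submatrix_apply, Fin.succAbove_last]
      have hne : (i.castSucc : Fin (n+1+1)) ≠ j.succ := by
        intro h
        have := congrArg (Fin.val) h
        simp at this; omega
      rw [Matrix.charmatrix_apply_ne _ _ _ hne]
      have : M i.castSucc j.succ = 0 := by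
        show companionPlusDiag (n+1+1) a b i.castSucc j.succ = 0
        have hi : (i : ℕ) < n + 1 := i.isLt
        have hj : (j : ℕ) < n + 1 := j.isLt
        simp only [companionPlusDiag, Fin.coe_castSucc, Fin.val_succ, Nat.add_sub_cancel]
        split_ifs <;> first | rfl | omega
      rw [this, map_zero, neg_zero]
    have hNdet : (((Matrix.charmatrix M).submatrix (Fin.last (n+1)).succAbove Fin.succ)).det
        = (-1 : ℝ[X])^(n+1) := by
      rw [Matrix.det_of_lowerTriangular _ hNtri]
      have hdiag : ∀ i : Fin (n+1),
          ((Matrix.charmatrix M).submatrix (Fin.last (n+1)).succAbove Fin.succ) i i = -1 := by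
        intro i
        rw [Matrix.submatrix_apply, Fin.succAbove_last]
        have hne : (i.castSucc : Fin (n+1+1)) ≠ i.succ := by
          intro h
          have := congrArg (Fin.val) h
          simp at this
        rw [Matrix.charmatrix_apply_ne _ _ _ hne]
        have : M i.castSucc i.succ = 1 := by
          show companionPlusDiag (n+1+1) a b i.castSucc i.succ = 1
          simp only [companionPlusDiag, Fin.coe_castSucc, Fin.val_succ]
          rw [if_neg (by omega : ¬ ((i:ℕ) = (i:ℕ)+1))]
          simp
        rw [this, map_one]
      simp_rw [hdiag]
      simp
    -- entries of column 0
    have hM00 : (Matrix.charmatrix M) 0 0 = X - C (a 0) := by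
      rw [Matrix.charmatrix_apply_eq]
      simp [hM, companionPlusDiag]
    have hMl0 : (Matrix.charmatrix M) (Fin.last (n+1)) 0 = -C (b (n+2)) := by
      have hne : (Fin.last (n+1) : Fin (n+1+1)) ≠ 0 := by
        intro h; have := congrArg (Fin.val) h; simp at this
      rw [Matrix.charmatrix_apply_ne _ _ _ hne]
      have key : companionPlusDiag (n+1+1) a b (Fin.last (n+1)) 0 = b (n+2) := by
        simp only [companionPlusDiag, Fin.val_last]
        rw [if_neg (by simp), if_neg (by simp), if_pos (by simp)]
        norm_num
      show -C (companionPlusDiag (n+1+1) a b (Fin.last (n+1)) 0) = _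
      rw [key]
    have hcol : ∀ i : Fin (n+1+1), i ≠ 0 → i ≠ Fin.last (n+1) → (Matrix.charmatrix M) i 0 = 0 := by
      intro i hi0 hil
      have h1 : (i : ℕ) ≠ 0 := fun h => hi0 (Fin.ext h)
      have h2 : (i : ℕ) ≠ n + 1 := fun h => hil (Fin.ext h)
      have hne : i ≠ (0 : Fin (n+1+1)) := hi0
      rw [Matrix.charmatrix_apply_ne _ _ _ hne]
      have : M i 0 = 0 := by
        show companionPlusDiag (n+1+1) a b i 0 = 0
        simp only [companionPlusDiag]
        rw [if_neg (by simpa using h1), if_neg (by simp), if_neg (by omega)]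
      rw [this, map_zero, neg_zero]
    rw [Matrix.charpoly, Matrix.det_succ_column_zero]
    rw [Finset.sum_eq_add (0 : Fin (n+1+1)) (Fin.last (n+1))
      (by intro h; have := congrArg (Fin.val) h; simp at this)
      (by intro c _ hc; rw [hcol c hc.1 hc.2]; ring)
      (by intro h; exact absurd (Finset.mem_univ _) h)
      (by intro h; exact absurd (Finset.mem_univ _) h)]
    rw [hM00, hMl0, Fin.succAbove_zero, h0, hNdet]
    have hIH := ih (fun k => a (k+1))
    rw [← Matrix.charpoly, hIH]
    have hpow : ((-1 : ℝ[X]) ^ ((Fin.last (n+1) : Fin (n+1+1)) : ℕ)) * (-C (b (n+2))) * (-1 : ℝ[X])^(n+1)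
        = -C (b (n+2)) := by
      rw [Fin.val_last]
      have : ((-1 : ℝ[X])^(n+1)) * ((-1 : ℝ[X])^(n+1)) = 1 := by
        rw [← pow_add]
        exact Even.neg_one_pow ⟨n+1, by ring⟩
      calc ((-1 : ℝ[X]) ^ (n+1)) * (-C (b (n+2))) * (-1 : ℝ[X])^(n+1)
          = ((-1 : ℝ[X])^(n+1) * (-1 : ℝ[X])^(n+1)) * (-C (b (n+2))) := by ring
        _ = -C (b (n+2)) := by rw [this, one_mul]
    rw [hpow]
    simp only [Fin.val_zero, pow_zero, one_mul]
    -- now pure algebra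
    have hP : ∏ i ∈ Finset.range (n+1+1), (X - C (a i))
        = (∏ i ∈ Finset.range (n+1), (X - C (a (i+1)))) * (X - C (a 0)) := by
      rw [Finset.prod_range_succ']
    have hIcc : Finset.Icc 2 (n+1+1) = insert (n+2) (Finset.Icc 2 (n+1)) := by
      ext x; simp only [Finset.mem_Icc, Finset.mem_insert]; omega
    rw [hP, hIcc, Finset.sum_insert (by simp)]
    rw [mul_sub, Finset.mul_sum]
    have hterm : ∀ j ∈ Finset.Icc 2 (n+1),
        (X - C (a 0)) * (C (b j) * ∏ i ∈ Finset.range (n+1-j), (X - C (a (i+1))))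
        = C (b j) * ∏ i ∈ Finset.range (n+1+1-j), (X - C (a i)) := by
      intro j hj
      obtain ⟨h2, hle⟩ := Finset.mem_Icc.mp hj
      rw [show n+1+1-j = (n+1-j)+1 by omega, Finset.prod_range_succ']
      ring
    rw [Finset.sum_congr rfl hterm]
    rw [show n+1+1-(n+2) = 0 by omega]
    simp only [Finset.range_zero, Finset.prod_empty, mul_one]
    ring

/-- The characteristic polynomial of the companion-plus-diagonal matrix
equals `∏_{i=1}^n (x - a_i) - ∑_{j=2}^n b_j ∏_{i=1}^{n-j} (x - a_i)`. -/
theorem charpoly_companionPlusDiag (n : ℕ) (hn : 1 ≤ n) (a b : ℕ → ℝ) :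
    (companionPlusDiag n a b).charpoly =
      ∏ i ∈ Finset.range n, (X - C (a i)) -
        ∑ j ∈ Finset.Icc 2 n, C (b j) * ∏ i ∈ Finset.range (n - j), (X - C (a i)) := by
  obtain ⟨m, rfl⟩ : ∃ m, n = m + 1 := ⟨n - 1, by omega⟩
  exact companionPlusDiag_aux b m a
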